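/- Let l > 0, D > 0, ρ₀ > 0, and define S(t) = (64 ρ₀ l²/π⁴)·( ∑_{n=0}^∞ (1/(2n+1)²)·exp(−π²(2n+1)²Dt/l²) )² for t ≥ 0. Then S is integrable on (0, ∞) and ∫₀^∞ S(t) dt = (64 ρ₀ l⁴/(D π⁶))·∑_{n=0}^∞ ∑_{m=0}^∞ 1/( (2n+1)²·(2m+1)²·((2n+1)² + (2m+1)²) ). -/

import Mathlib

open Real MeasureTheory

/-- The survival probability
`S(t) = (64 ρ₀ l²/π⁴)(∑_{n=0}^∞ (2n+1)⁻² exp(−π²(2n+1)²Dt/l²))²`. -/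
noncomputable def survProb (l D ρ₀ t : ℝ) : ℝ :=
  64 * ρ₀ * l ^ 2 / π ^ 4 *
    (∑' n : ℕ, 1 / (2 * (n : ℝ) + 1) ^ 2 *
      Real.exp (-π ^ 2 * (2 * (n : ℝ) + 1) ^ 2 * D * t / l ^ 2)) ^ 2

lemma summable_aux : Summable (fun n : ℕ => 1 / (2 * (n : ℝ) + 1) ^ 2) := by
  have h : Summable (fun n : ℕ => 1 / ((n : ℝ) + 1) ^ 2) := by
    have := (summable_nat_add_iff (f := fun n : ℕ => 1 / (n : ℝ) ^ 2) 1).2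
      (summable_one_div_nat_pow.2 one_lt_two)
    simpa using this
  refine Summable.of_nonneg_of_le (fun n => by positivity) (fun n => ?_) h
  apply one_div_le_one_div_of_le (by positivity)
  nlinarith [Nat.cast_nonneg (α := ℝ) n]

lemma integral_exp_aux {b : ℝ} (hb : 0 < b) :
    ∫ t in Set.Ioi (0 : ℝ), Real.exp (-(b * t)) = 1 / b := by
  have := integral_comp_mul_left_Ioi (fun x => Real.exp (-x)) 0 hb
  simp only [mul_zero, integral_exp_neg_Ioi, neg_zero, Real.exp_zero, smul_eq_mul,
    mul_one] at this
  simpa [one_div] using this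

/-- The survival probability is integrable on `(0,∞)`, and the mean reaction time
`∫₀^∞ S(t) dt` equals
`(64 ρ₀ l⁴/(D π⁶)) ∑_{n,m} 1/((2n+1)²(2m+1)²((2n+1)² + (2m+1)²))`. -/
theorem mean_reaction_time_eq_double_series (l D ρ₀ : ℝ) (hl : 0 < l) (hD : 0 < D)
    (hρ₀ : 0 < ρ₀) :
    IntegrableOn (survProb l D ρ₀) (Set.Ioi 0) ∧
    (∫ t in Set.Ioi (0 : ℝ), survProb l D ρ₀ t)
      = 64 * ρ₀ * l ^ 4 / (D * π ^ 6) *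
        ∑' n : ℕ, ∑' m : ℕ,
          1 / ((2 * (n : ℝ) + 1) ^ 2 * (2 * (m : ℝ) + 1) ^ 2 *
            ((2 * (n : ℝ) + 1) ^ 2 + (2 * (m : ℝ) + 1) ^ 2)) := by
  have hπ : (0 : ℝ) < π := Real.pi_pos
  set c : ℝ := π ^ 2 * D / l ^ 2 with hc_def
  have hc : 0 < c := by positivity
  set a : ℕ → ℝ := fun n => 1 / (2 * (n : ℝ) + 1) ^ 2 with ha_def
  have ha_pos : ∀ n, 0 < a n := fun n => by positivity
  have ha_sum : Summable a := summable_aux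
  set K : ℝ := 64 * ρ₀ * l ^ 2 / π ^ 4 with hK_def
  have hK : 0 < K := by positivity
  -- rewrite the exponent
  have hexp : ∀ (n : ℕ) (t : ℝ),
      Real.exp (-π ^ 2 * (2 * (n : ℝ) + 1) ^ 2 * D * t / l ^ 2)
        = Real.exp (-(c * (2 * (n : ℝ) + 1) ^ 2 * t)) := by
    intro n t
    congr 1
    rw [hc_def]
    ring
  set f : ℕ → ℝ → ℝ := fun n t => a n * Real.exp (-(c * (2 * (n : ℝ) + 1) ^ 2 * t)) with hf_def
  have hS : ∀ t, survProb l D ρ₀ t = K * (∑' n, f n t) ^ 2 := by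
    intro t
    simp only [survProb, hf_def, hK_def, ha_def]
    congr 2
    exact tsum_congr fun n => by rw [hexp]
  -- pointwise bounds for t ≥ 0
  have hfle : ∀ (n : ℕ) {t : ℝ}, 0 ≤ t → f n t ≤ a n * Real.exp (-(c * t)) := by
    intro n t ht
    refine mul_le_mul_of_nonneg_left ?_ (ha_pos n).le
    apply Real.exp_le_exp.2
    have h1 : (1 : ℝ) ≤ (2 * (n : ℝ) + 1) ^ 2 := by nlinarith [Nat.cast_nonneg (α := ℝ) n]
    nlinarith [mul_nonneg hc.le ht]
  have hf_nonneg : ∀ (n : ℕ) (t : ℝ), 0 ≤ f n t := fun n t => by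
    exact mul_nonneg (ha_pos n).le (Real.exp_nonneg _)
  have hf_sum : ∀ {t : ℝ}, 0 ≤ t → Summable fun n => f n t := by
    intro t ht
    refine Summable.of_nonneg_of_le (fun n => hf_nonneg n t) (fun n => ?_)
      (ha_sum.mul_right (Real.exp (-(c * t))))
    exact hfle n ht
  -- the double-indexed family
  set F : ℕ × ℕ → ℝ → ℝ := fun p t =>
    a p.1 * a p.2 *
      Real.exp (-(c * ((2 * (p.1 : ℝ) + 1) ^ 2 + (2 * (p.2 : ℝ) + 1) ^ 2) * t)) with hF_def
  have hsq : ∀ {t : ℝ}, 0 ≤ t → (∑' n, f n t) ^ 2 = ∑' p : ℕ × ℕ, F p t := by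
    intro t ht
    rw [sq]
    rw [tsum_mul_tsum_of_summable_norm
      (by simpa [abs_of_nonneg (hf_nonneg _ t)] using hf_sum ht)
      (by simpa [abs_of_nonneg (hf_nonneg _ t)] using hf_sum ht)]
    refine tsum_congr fun p => ?_
    simp only [hf_def, hF_def]
    have he : -(c * ((2 * (p.1 : ℝ) + 1) ^ 2 + (2 * (p.2 : ℝ) + 1) ^ 2) * t)
        = -(c * (2 * (p.1 : ℝ) + 1) ^ 2 * t) + -(c * (2 * (p.2 : ℝ) + 1) ^ 2 * t) := by ring
    rw [he, Real.exp_add]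
    ring
  -- integrability of S
  have hS_anti : AntitoneOn (survProb l D ρ₀) (Set.Ioi 0) := by
    intro s hs t ht hst
    rw [hS, hS]
    have hsum_s := hf_sum (le_of_lt hs)
    have hsum_t := hf_sum (le_of_lt ht)
    have hle : (∑' n, f n t) ≤ ∑' n, f n s := by
      refine Summable.tsum_le_tsum (fun n => ?_) hsum_t hsum_s
      refine mul_le_mul_of_nonneg_left (Real.exp_le_exp.2 ?_) (ha_pos n).le
      have h2 : c * (2 * (n : ℝ) + 1) ^ 2 * s ≤ c * (2 * (n : ℝ) + 1) ^ 2 * t :=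
        mul_le_mul_of_nonneg_left hst (by positivity)
      linarith
    have h0 : 0 ≤ ∑' n, f n t := tsum_nonneg fun n => hf_nonneg n t
    have h1 := pow_le_pow_left₀ h0 hle 2
    exact mul_le_mul_of_nonneg_left h1 hK.le
  have hS_meas : AEMeasurable (survProb l D ρ₀) (volume.restrict (Set.Ioi 0)) :=
    aemeasurable_restrict_of_antitoneOn measurableSet_Ioi hS_anti
  set A : ℝ := ∑' n, a n with hA_def
  have hS_int : IntegrableOn (survProb l D ρ₀) (Set.Ioi 0) := by
    have hbound : IntegrableOn (fun t => K * A ^ 2 * Real.exp (-(2 * c) * t)) (Set.Ioi 0) := by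
      exact (exp_neg_integrableOn_Ioi 0 (by positivity)).const_mul _
    refine Integrable.mono' hbound hS_meas.aestronglyMeasurable ?_
    filter_upwards [ae_restrict_mem measurableSet_Ioi] with t ht
    rw [hS, Real.norm_eq_abs, abs_of_nonneg]
    · have hle : (∑' n, f n t) ≤ A * Real.exp (-(c * t)) := by
        calc (∑' n, f n t) ≤ ∑' n, a n * Real.exp (-(c * t)) :=
              Summable.tsum_le_tsum (fun n => hfle n (le_of_lt ht)) (hf_sum (le_of_lt ht))
                (ha_sum.mul_right _)
          _ = A * Real.exp (-(c * t)) := by rw [tsum_mul_right]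
      have h0 : 0 ≤ ∑' n, f n t := tsum_nonneg fun n => hf_nonneg n t
      have hA0 : 0 ≤ A := tsum_nonneg fun n => (ha_pos n).le
      have : (∑' n, f n t) ^ 2 ≤ (A * Real.exp (-(c * t))) ^ 2 := by
        exact pow_le_pow_left₀ h0 hle 2
      calc K * (∑' n, f n t) ^ 2 ≤ K * (A * Real.exp (-(c * t))) ^ 2 := by
            exact mul_le_mul_of_nonneg_left this hK.le
        _ = K * A ^ 2 * Real.exp (-(2 * c) * t) := by
            rw [mul_pow, ← Real.exp_nat_mul]
            ring_nf
    · exact mul_nonneg hK.le (sq_nonneg _)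
  refine ⟨hS_int, ?_⟩
  -- set up notation for the coefficients
  set b : ℕ × ℕ → ℝ := fun p => (2 * (p.1 : ℝ) + 1) ^ 2 + (2 * (p.2 : ℝ) + 1) ^ 2 with hb_def
  have hb_pos : ∀ p, 0 < b p := fun p => by positivity
  have hb_ge : ∀ p, (1 : ℝ) ≤ b p := by
    intro p
    have h1 : (1 : ℝ) ≤ (2 * (p.1 : ℝ) + 1) ^ 2 := by nlinarith [Nat.cast_nonneg (α := ℝ) p.1]
    have h2 : (0 : ℝ) ≤ (2 * (p.2 : ℝ) + 1) ^ 2 := by positivity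
    simp only [hb_def]; linarith
  -- integrability of each F p and values
  have hF_int : ∀ p : ℕ × ℕ, IntegrableOn (F p) (Set.Ioi 0) := by
    intro p
    have hFp : F p = fun t => a p.1 * a p.2 * Real.exp (-(c * b p) * t) := by
      funext t
      simp only [hF_def, hb_def, neg_mul, mul_assoc]
    rw [hFp]
    exact (exp_neg_integrableOn_Ioi 0 (by positivity)).const_mul _
  have hF_val : ∀ p : ℕ × ℕ,
      (∫ t in Set.Ioi (0 : ℝ), F p t) = a p.1 * a p.2 * (1 / (c * b p)) := by
    intro p
    have h1 : (∫ t in Set.Ioi (0 : ℝ), F p t)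
        = a p.1 * a p.2 * ∫ t in Set.Ioi (0 : ℝ), Real.exp (-(c * b p * t)) := by
      rw [← integral_const_mul]
    rw [h1, integral_exp_aux (by positivity)]
  -- summability of the integrals
  have hprod_sum : Summable (fun p : ℕ × ℕ => a p.1 * a p.2) :=
    ha_sum.mul_of_nonneg ha_sum (fun n => (ha_pos n).le) (fun n => (ha_pos n).le)
  have hval_sum : Summable (fun p : ℕ × ℕ => a p.1 * a p.2 * (1 / (c * b p))) := by
    refine Summable.of_nonneg_of_le (fun p => by positivity) (fun p => ?_)
      (hprod_sum.mul_right (1 / c))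
    have h1 : 1 / (c * b p) ≤ 1 / c := by
      rw [div_le_div_iff₀ (by positivity) hc]
      nlinarith [hb_ge p, hc]
    calc a p.1 * a p.2 * (1 / (c * b p)) ≤ a p.1 * a p.2 * (1 / c) := by
          exact mul_le_mul_of_nonneg_left h1 (by positivity)
      _ = a p.1 * a p.2 * (1 / c) := rfl
  have hnorm_sum : Summable (fun p : ℕ × ℕ => ∫ t in Set.Ioi (0 : ℝ), ‖F p t‖) := by
    refine hval_sum.congr fun p => ?_
    rw [← hF_val p]
    refine setIntegral_congr_fun measurableSet_Ioi (fun t _ => ?_)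
    rw [Real.norm_eq_abs, abs_of_nonneg]
    exact mul_nonneg (by positivity) (Real.exp_nonneg _)
  -- exchange integral and sum
  have hexch : (∑' p : ℕ × ℕ, ∫ t in Set.Ioi (0 : ℝ), F p t)
      = ∫ t in Set.Ioi (0 : ℝ), ∑' p : ℕ × ℕ, F p t :=
    integral_tsum_of_summable_integral_norm hF_int hnorm_sum
  have hmain : (∫ t in Set.Ioi (0 : ℝ), survProb l D ρ₀ t)
      = K * ∑' p : ℕ × ℕ, a p.1 * a p.2 * (1 / (c * b p)) := by
    have h1 : (∫ t in Set.Ioi (0 : ℝ), survProb l D ρ₀ t)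
        = ∫ t in Set.Ioi (0 : ℝ), K * ∑' p : ℕ × ℕ, F p t := by
      refine setIntegral_congr_fun measurableSet_Ioi (fun t ht => ?_)
      rw [hS, hsq (le_of_lt ht)]
    rw [h1, integral_const_mul, ← hexch]
    congr 1
    exact tsum_congr fun p => hF_val p
  rw [hmain]
  -- convert the double sum
  have hsummand : ∀ p : ℕ × ℕ, a p.1 * a p.2 * (1 / (c * b p))
      = (1 / c) * (1 / ((2 * (p.1 : ℝ) + 1) ^ 2 * (2 * (p.2 : ℝ) + 1) ^ 2 *
          ((2 * (p.1 : ℝ) + 1) ^ 2 + (2 * (p.2 : ℝ) + 1) ^ 2))) := by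
    intro p
    simp only [ha_def, hb_def]
    rw [div_mul_div_comm, div_mul_div_comm, div_mul_div_comm]
    ring_nf
  have hKc : K * (1 / c) = 64 * ρ₀ * l ^ 4 / (D * π ^ 6) := by
    rw [hK_def, hc_def]
    field_simp
  have hsum2 : Summable (fun p : ℕ × ℕ =>
      1 / ((2 * (p.1 : ℝ) + 1) ^ 2 * (2 * (p.2 : ℝ) + 1) ^ 2 *
        ((2 * (p.1 : ℝ) + 1) ^ 2 + (2 * (p.2 : ℝ) + 1) ^ 2))) := by
    have := hval_sum.mul_left c
    refine this.congr fun p => ?_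
    rw [hsummand p]
    field_simp
  calc K * ∑' p : ℕ × ℕ, a p.1 * a p.2 * (1 / (c * b p))
      = K * ∑' p : ℕ × ℕ, (1 / c) * (1 / ((2 * (p.1 : ℝ) + 1) ^ 2 * (2 * (p.2 : ℝ) + 1) ^ 2 *
          ((2 * (p.1 : ℝ) + 1) ^ 2 + (2 * (p.2 : ℝ) + 1) ^ 2))) := by
        congr 1; exact tsum_congr hsummand
    _ = K * (1 / c) * ∑' p : ℕ × ℕ, (1 / ((2 * (p.1 : ℝ) + 1) ^ 2 * (2 * (p.2 : ℝ) + 1) ^ 2 *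
          ((2 * (p.1 : ℝ) + 1) ^ 2 + (2 * (p.2 : ℝ) + 1) ^ 2))) := by
        rw [tsum_mul_left]; ring
    _ = 64 * ρ₀ * l ^ 4 / (D * π ^ 6) *
        ∑' n : ℕ, ∑' m : ℕ,
          1 / ((2 * (n : ℝ) + 1) ^ 2 * (2 * (m : ℝ) + 1) ^ 2 *
            ((2 * (n : ℝ) + 1) ^ 2 + (2 * (m : ℝ) + 1) ^ 2)) := by
        rw [hKc, Summable.tsum_prod' hsum2 (fun n => ?_)]
        refine Summable.of_nonneg_of_le (fun m => by positivity) (fun m => ?_)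
          (summable_aux.mul_left (1 / (2 * (n : ℝ) + 1) ^ 2))
        rw [div_mul_div_comm, one_mul]
        apply one_div_le_one_div_of_le (by positivity)
        refine le_mul_of_one_le_right (by positivity) ?_
        nlinarith [Nat.cast_nonneg (α := ℝ) n, Nat.cast_nonneg (α := ℝ) m]
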